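/- Every real number c in (0,1) is a limit of a sequence of numbers of the form (1/2^{m₀}) · ∏_{i=1}^{k} (1 − 1/2^{m_i}) with integers m₀ ≥ 0, m_i ≥ 1, k ≥ 0. Equivalently, the set of all finite products of elements from {1/2^m : m ≥ 1} ∪ {1 − 1/2^m : m ≥ 1} is dense in [0,1]. -/

import Mathlib

/-- Finite products of numbers of the form `1/2^m` or `1 - 1/2^m` with `m ≥ 1`
(the empty product `1` included). -/
def dyadicProducts : Set ℝ :=
  {x : ℝ | ∃ L : List ℝ,
    (∀ y ∈ L, (∃ m : ℕ, 1 ≤ m ∧ y = 1 / 2 ^ m) ∨ (∃ m : ℕ, 1 ≤ m ∧ y = 1 - 1 / 2 ^ m)) ∧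
    L.prod = x}

lemma dyadic_pow_mem (m : ℕ) (hm : 1 ≤ m) : (1 / 2 ^ m : ℝ) ∈ dyadicProducts := by
  refine ⟨[1 / 2 ^ m], ?_, by simp⟩
  intro y hy
  simp only [List.mem_singleton] at hy
  exact Or.inl ⟨m, hm, hy⟩

lemma dyadic_one_sub_pow_mem (k i : ℕ) (hk : 1 ≤ k) :
    ((1 - 1 / 2 ^ k : ℝ)) ^ i ∈ dyadicProducts := by
  refine ⟨List.replicate i (1 - 1 / 2 ^ k), ?_, by simp⟩
  intro y hy
  have := List.eq_of_mem_replicate hy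
  exact Or.inr ⟨k, hk, this⟩

lemma dyadic_subset : dyadicProducts ⊆ Set.Icc (0 : ℝ) 1 := by
  rintro x ⟨L, hL, rfl⟩
  induction L with
  | nil => simp
  | cons a L ih =>
    have ha := hL a (List.mem_cons_self (a := a) (l := L))
    have ha' : 0 ≤ a ∧ a ≤ 1 := by
      rcases ha with ⟨m, hm, rfl⟩ | ⟨m, hm, rfl⟩
      · constructor
        · positivity
        · rw [div_le_one (by positivity)]
          exact one_le_pow₀ (by norm_num)
      · have h1 : (0:ℝ) < 1 / 2 ^ m := by positivity
        have h2 : (1:ℝ) / 2 ^ m ≤ 1 := by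
          rw [div_le_one (by positivity)]
          exact one_le_pow₀ (by norm_num)
        constructor <;> [linarith; linarith]
    have hrest := ih (fun y hy => hL y (List.mem_cons_of_mem a hy))
    simp only [List.prod_cons]
    rcases hrest with ⟨h0, h1⟩
    constructor
    · exact mul_nonneg ha'.1 h0
    · calc a * L.prod ≤ 1 * 1 := by
            apply mul_le_mul ha'.2 h1 h0 (by norm_num)
        _ = 1 := by norm_num

theorem closure_dyadicProducts : closure dyadicProducts = Set.Icc (0 : ℝ) 1 := by
  apply le_antisymm
  · exact closure_minimal dyadic_subset isClosed_Icc
  · rintro c ⟨hc0, hc1⟩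
    rw [Metric.mem_closure_iff]
    intro ε hε
    rcases eq_or_lt_of_le hc0 with hc | hc
    · -- c = 0 : approximate by 1/2^m
      obtain ⟨m, hm⟩ := exists_pow_lt_of_lt_one hε (by norm_num : (1/2 : ℝ) < 1)
      refine ⟨1 / 2 ^ (m + 1), dyadic_pow_mem (m + 1) (Nat.le_add_left 1 m), ?_⟩
      rw [← hc, Real.dist_eq]
      have h1 : (0:ℝ) < 1 / 2 ^ (m+1) := by positivity
      have h2 : (1 / 2 : ℝ) ^ (m+1) ≤ (1/2 : ℝ) ^ m :=
        pow_le_pow_of_le_one (by norm_num) (by norm_num) (Nat.le_succ m)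
      have h3 : (1:ℝ) / 2 ^ (m+1) = (1/2 : ℝ) ^ (m+1) := by
        rw [div_pow]; norm_num
      rw [abs_of_nonpos (by linarith)]
      rw [neg_sub, sub_zero, h3]
      linarith
    · -- c > 0 : greedy powers of (1 - 2^{-k})
      obtain ⟨k, hk⟩ := exists_pow_lt_of_lt_one hε (by norm_num : (1/2 : ℝ) < 1)
      set θ : ℝ := 1 / 2 ^ (k + 1) with hθdef
      have hθpos : 0 < θ := by positivity
      have hθlt : θ < 1 := by
        rw [hθdef, div_lt_one (by positivity)]
        exact one_lt_pow₀ (by norm_num) (Nat.succ_ne_zero k)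
      have hθε : θ < ε := by
        have h3 : θ = (1/2 : ℝ) ^ (k+1) := by rw [hθdef, div_pow]; norm_num
        have h2 : (1 / 2 : ℝ) ^ (k+1) ≤ (1/2 : ℝ) ^ k :=
          pow_le_pow_of_le_one (by norm_num) (by norm_num) (Nat.le_succ k)
        linarith
      have hbase : (0:ℝ) ≤ 1 - θ := by linarith
      have hbase1 : 1 - θ < 1 := by linarith
      have hex : ∃ n : ℕ, (1 - θ) ^ n < c := exists_pow_lt_of_lt_one hc hbase1
      have hnlt : (1 - θ) ^ Nat.find hex < c := Nat.find_spec hex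
      have hn0 : Nat.find hex ≠ 0 := by
        intro h
        rw [h, pow_zero] at hnlt
        linarith
      obtain ⟨i, hni⟩ := Nat.exists_eq_succ_of_ne_zero hn0
      rw [hni] at hnlt
      have hige : c ≤ (1 - θ) ^ i := by
        by_contra h
        push_neg at h
        exact Nat.find_min hex (hni ▸ Nat.lt_succ_self i) h
      refine ⟨(1 - θ) ^ i, dyadic_one_sub_pow_mem (k + 1) i (Nat.le_add_left 1 k), ?_⟩
      rw [Real.dist_eq, abs_of_nonpos (by linarith)]
      have hple : (1 - θ) ^ i ≤ 1 := pow_le_one₀ hbase (le_of_lt hbase1)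
      have hsucc : (1 - θ) ^ (i + 1) = (1 - θ) ^ i * (1 - θ) := pow_succ _ _
      rw [Nat.succ_eq_add_one] at hnlt
      -- c > (1-θ)^{i+1} = (1-θ)^i (1-θ), so (1-θ)^i - c < θ (1-θ)^i ≤ θ < ε
      have : (1 - θ) ^ i - c < θ * (1 - θ) ^ i := by nlinarith
      have hθp : θ * (1 - θ) ^ i ≤ θ := by nlinarith
      rw [neg_sub]
      linarith
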